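/- For all x ∈ [0, ϖ/2], ∫₀^x sl(t) dt = (1/2)·arcsin(sl²(x)), where arcsin is the ordinary inverse sine function. -/

import Mathlib

open Set MeasureTheory Filter

/-- Generalized arcsine: `arcsin_{p,q}(x) = ∫₀ˣ (1 - tᵠ)^(-1/p) dt`. -/
noncomputable def gArcsin (p q x : ℝ) : ℝ := ∫ t in (0:ℝ)..x, (1 - t ^ q) ^ (-(1 / p))

/-- Generalized pi: `π_{p,q} = 2 ∫₀¹ (1 - tᵠ)^(-1/p) dt`. -/
noncomputable def gPi (p q : ℝ) : ℝ := 2 * gArcsin p q 1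

/-- `S` is the generalized sine `sin_{p,q}` (the inverse of `gArcsin p q` on `[0,1]`). -/
def IsGSin (p q : ℝ) (S : ℝ → ℝ) : Prop :=
  ∀ y ∈ Icc (0:ℝ) 1, S (gArcsin p q y) = y

/-- `C` is the generalized cosine `cos_{p,q}`, the derivative of `S = sin_{p,q}`
on `[0, π_{p,q}/2]`. -/
def IsGCos (p q : ℝ) (S C : ℝ → ℝ) : Prop :=
  ∀ x ∈ Icc (0:ℝ) (gPi p q / 2), HasDerivWithinAt S (C x) (Icc (0:ℝ) (gPi p q / 2)) x

noncomputable def lemF (t : ℝ) : ℝ := (1 - t ^ (4:ℝ)) ^ (-(1/2) : ℝ)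

lemma gArcsin_fun_eq : gArcsin 2 4 = fun x => ∫ t in (0:ℝ)..x, lemF t := rfl

lemma gArcsin_eq (x : ℝ) : gArcsin 2 4 x = ∫ t in (0:ℝ)..x, lemF t := rfl

lemma lemF_nonneg {t : ℝ} (ht : t ∈ Icc (0:ℝ) 1) : 0 ≤ lemF t := by
  apply Real.rpow_nonneg
  have : t ^ (4:ℝ) ≤ 1 := Real.rpow_le_one ht.1 ht.2 (by norm_num)
  linarith

lemma lemF_pos {t : ℝ} (h0 : 0 ≤ t) (h1 : t < 1) : 0 < lemF t := by
  apply Real.rpow_pos_of_pos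
  have : t ^ (4:ℝ) < 1 := by
    rcases eq_or_lt_of_le h0 with h | h
    · rw [← h, Real.zero_rpow (by norm_num)]; norm_num
    · exact Real.rpow_lt_one h0 h1 (by norm_num)
  linarith

lemma lemF_meas : Measurable lemF := by
  unfold lemF; fun_prop

lemma lemF_int : IntegrableOn lemF (Icc (0:ℝ) 1) := by
  have hmaj : IntegrableOn (fun t : ℝ => (1 - t) ^ (-(1/2) : ℝ)) (Icc (0:ℝ) 1) := by
    have h1 : IntervalIntegrable (fun t : ℝ => t ^ (-(1/2) : ℝ)) volume 0 1 :=
      intervalIntegral.intervalIntegrable_rpow' (by norm_num)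
    have h2 := h1.comp_sub_left 1
    simp only [sub_zero, sub_self] at h2
    have := h2.symm
    rwa [intervalIntegrable_iff_integrableOn_Icc_of_le (by norm_num)] at this
  refine Integrable.mono' hmaj (lemF_meas.aestronglyMeasurable) ?_
  refine (ae_restrict_iff' measurableSet_Icc).2 (ae_of_all _ fun t ht => ?_)
  rw [Real.norm_of_nonneg (lemF_nonneg ht)]
  rcases eq_or_lt_of_le ht.2 with h | h
  · rw [h]; unfold lemF
    norm_num
  · have h4 : t ^ (4:ℝ) ≤ t := by
      rcases eq_or_lt_of_le ht.1 with h0 | h0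
      · rw [← h0, Real.zero_rpow (by norm_num)]
      · calc t ^ (4:ℝ) ≤ t ^ (1:ℝ) :=
              Real.rpow_le_rpow_of_exponent_ge h0 h.le (by norm_num)
          _ = t := Real.rpow_one t
    exact Real.rpow_le_rpow_of_nonpos (by linarith) (by linarith) (by norm_num)

lemma lemF_ii {a b : ℝ} (ha : a ∈ Icc (0:ℝ) 1) (hb : b ∈ Icc (0:ℝ) 1) :
    IntervalIntegrable lemF volume a b := by
  rw [intervalIntegrable_iff]
  exact lemF_int.mono_set ((uIoc_subset_uIcc).trans (uIcc_subset_Icc ha hb))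

lemma gA_cont : ContinuousOn (gArcsin 2 4) (Icc (0:ℝ) 1) := by
  have := intervalIntegral.continuousOn_primitive_interval'
    (lemF_ii (by simp) (by norm_num : (1:ℝ) ∈ Icc (0:ℝ) 1))
    (by simp : (0:ℝ) ∈ uIcc (0:ℝ) 1)
  simpa [gArcsin_eq, gArcsin_fun_eq, uIcc_of_le (by norm_num : (0:ℝ) ≤ 1)] using this

lemma gA_zero : gArcsin 2 4 0 = 0 := by
  rw [gArcsin_eq, intervalIntegral.integral_same]

lemma gA_mono : StrictMonoOn (gArcsin 2 4) (Icc (0:ℝ) 1) := by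
  intro a ha b hb hab
  have key : gArcsin 2 4 b = gArcsin 2 4 a + ∫ t in a..b, lemF t := by
    rw [gArcsin_eq, gArcsin_eq,
      intervalIntegral.integral_add_adjacent_intervals (lemF_ii (by simp) ha) (lemF_ii ha hb)]
  have hpos : 0 < ∫ t in a..b, lemF t := by
    apply intervalIntegral.intervalIntegral_pos_of_pos_on (lemF_ii ha hb) _ hab
    intro t ht
    exact lemF_pos (le_of_lt (lt_of_le_of_lt ha.1 ht.1)) (lt_of_lt_of_le ht.2 hb.2)
  linarith

lemma gA_deriv {u : ℝ} (h0 : 0 < u) (h1 : u < 1) :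
    HasDerivAt (gArcsin 2 4) (lemF u) u := by
  have hcont : ContinuousAt lemF u := by
    have hb : ContinuousAt (fun t : ℝ => 1 - t ^ (4:ℝ)) u :=
      continuousAt_const.sub (Real.continuousAt_rpow_const u 4 (Or.inr (by norm_num)))
    apply ContinuousAt.rpow_const hb
    left
    have : u ^ (4:ℝ) < 1 := Real.rpow_lt_one h0.le h1 (by norm_num)
    intro h; linarith
  have := intervalIntegral.integral_hasDerivAt_right
    (lemF_ii (Set.mem_Icc.mpr ⟨le_refl 0, zero_le_one⟩) ⟨h0.le, h1.le⟩)
    lemF_meas.stronglyMeasurable.stronglyMeasurableAtFilter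
    hcont
  exact gArcsin_fun_eq ▸ this

noncomputable def lemSl : ℝ → ℝ := Function.invFunOn (gArcsin 2 4) (Icc 0 1)

lemma lemSl_gA {u : ℝ} (hu : u ∈ Icc (0:ℝ) 1) : lemSl (gArcsin 2 4 u) = u :=
  gA_mono.injOn.leftInvOn_invFunOn hu

lemma gA_surj : Icc (0:ℝ) (gArcsin 2 4 1) ⊆ gArcsin 2 4 '' Icc 0 1 := by
  have := intermediate_value_Icc (zero_le_one) gA_cont
  rwa [gA_zero] at this

lemma gA_mem {u : ℝ} (hu : u ∈ Icc (0:ℝ) 1) :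
    gArcsin 2 4 u ∈ Icc (0:ℝ) (gArcsin 2 4 1) := by
  constructor
  · rw [← gA_zero]
    exact gA_mono.monotoneOn (by simp) hu hu.1
  · exact gA_mono.monotoneOn hu (by norm_num) hu.2

lemma lemSl_strictMono : StrictMonoOn lemSl (Icc (0:ℝ) (gArcsin 2 4 1)) := by
  intro t1 h1 t2 h2 h12
  obtain ⟨u1, hu1, e1⟩ := gA_surj h1
  obtain ⟨u2, hu2, e2⟩ := gA_surj h2
  rw [← e1, ← e2, lemSl_gA hu1, lemSl_gA hu2]
  by_contra h
  push_neg at h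
  have := gA_mono.monotoneOn hu2 hu1 h
  rw [e1, e2] at this
  linarith

lemma lemSl_contAt {t : ℝ} (h0 : 0 < t) (h1 : t < gArcsin 2 4 1) : ContinuousAt lemSl t := by
  apply lemSl_strictMono.continuousAt_of_image_mem_nhds (Icc_mem_nhds h0 h1)
  obtain ⟨u, hu, e⟩ := gA_surj ⟨h0.le, h1.le⟩
  have hsl : lemSl t = u := by rw [← e, lemSl_gA hu]
  have hu0 : 0 < u := by
    rcases eq_or_lt_of_le hu.1 with h | h
    · exfalso; rw [← h] at e; rw [gA_zero] at e; linarith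
    · exact h
  have hu1 : u < 1 := by
    rcases eq_or_lt_of_le hu.2 with h | h
    · exfalso; rw [h] at e; linarith
    · exact h
  rw [hsl]
  refine mem_of_superset (Ioo_mem_nhds hu0 hu1) (fun v hv => ?_)
  exact ⟨gArcsin 2 4 v, gA_mem ⟨hv.1.le, hv.2.le⟩, lemSl_gA ⟨hv.1.le, hv.2.le⟩⟩

lemma lemSl_int : IntegrableOn lemSl (Icc (0:ℝ) (gArcsin 2 4 1)) :=
  lemSl_strictMono.monotoneOn.integrableOn_isCompact isCompact_Icc

lemma arcsin_int {y : ℝ} (hy : y ∈ Icc (0:ℝ) 1) :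
    ∫ u in (0:ℝ)..y, lemF u * u = (1/2) * Real.arcsin (y ^ 2) := by
  have hderiv : ∀ u ∈ Ioo (0:ℝ) y, HasDerivWithinAt
      (fun u : ℝ => (1/2) * Real.arcsin (u ^ 2)) (lemF u * u) (Ioi u) u := by
    intro u hu
    have hu0 : 0 < u := hu.1
    have hu1 : u < 1 := lt_of_lt_of_le hu.2 hy.2
    have h1 : HasDerivAt (fun v : ℝ => v ^ 2) (2 * u) u := by
      simpa using hasDerivAt_pow 2 u
    have hne1 : (u:ℝ) ^ 2 ≠ 1 := by nlinarith
    have hne2 : (u:ℝ) ^ 2 ≠ -1 := by nlinarith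
    have h2 : HasDerivAt Real.arcsin (1 / Real.sqrt (1 - (u ^ 2) ^ 2))
        ((fun v : ℝ => v ^ 2) u) := Real.hasDerivAt_arcsin hne2 hne1
    have h3' : HasDerivAt (Real.arcsin ∘ fun v : ℝ => v ^ 2)
        (1 / Real.sqrt (1 - (u ^ 2) ^ 2) * (2 * u)) u :=
      HasDerivAt.comp u h2 h1
    have h3 := h3'.const_mul (1/2 : ℝ)
    have h4 : (u:ℝ) ^ 2 < 1 := by nlinarith
    have hpos : 0 < 1 - (u ^ 2) ^ 2 := by nlinarith [sq_nonneg u]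
    have heq : lemF u * u = 1/2 * (1 / Real.sqrt (1 - (u ^ 2) ^ 2) * (2 * u)) := by
      have e1 : lemF u = (Real.sqrt (1 - (u ^ 2) ^ 2))⁻¹ := by
        unfold lemF
        rw [show (u:ℝ) ^ (4:ℝ) = (u ^ 2) ^ 2 by
          rw [show ((4:ℝ)) = ((4:ℕ):ℝ) by norm_num, Real.rpow_natCast]; ring]
        rw [Real.sqrt_eq_rpow, ← Real.rpow_neg_one, ← Real.rpow_mul hpos.le]
        norm_num
      rw [e1]
      field_simp
    rw [heq]
    exact h3.hasDerivWithinAt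
  have key := intervalIntegral.integral_eq_sub_of_hasDeriv_right_of_le
    (f := fun u : ℝ => (1/2) * Real.arcsin (u ^ 2)) (f' := fun u => lemF u * u) hy.1
    (Continuous.continuousOn (by continuity)) hderiv
    ((lemF_ii (by simp) hy).mul_continuousOn continuous_id.continuousOn)
  rw [key]
  norm_num

/-- Corollary 3.3, first part: `∫₀ˣ sl(t) dt = (1/2) arcsin(sl²(x))` for
`x ∈ [0, ϖ/2]`, where `sl = sin_{2,4}` is the lemniscate sine and `ϖ = π_{2,4}`. -/
theorem stmt_6 (S : ℝ → ℝ) (hS : IsGSin 2 4 S)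
    (x : ℝ) (hx : x ∈ Icc (0:ℝ) (gPi 2 4 / 2)) :
    ∫ t in (0:ℝ)..x, S t = (1 / 2) * Real.arcsin ((S x) ^ 2) := by
  have hx1 : gPi 2 4 / 2 = gArcsin 2 4 1 := by rw [gPi]; ring
  rw [hx1] at hx
  obtain ⟨y, hy, hxy⟩ := gA_surj hx
  have hSx : S x = y := by rw [← hxy]; exact hS y hy
  have hx0 : (0:ℝ) ≤ x := hx.1
  have hEq : EqOn S lemSl (uIcc 0 x) := by
    intro t ht
    rw [uIcc_of_le hx0] at ht
    have ht' : t ∈ Icc 0 (gArcsin 2 4 1) := ⟨ht.1, le_trans ht.2 hx.2⟩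
    obtain ⟨u, hu, e⟩ := gA_surj ht'
    rw [← e, hS u hu, lemSl_gA hu]
  rw [intervalIntegral.integral_congr hEq, hSx]
  have h0y : (0:ℝ) ≤ y := hy.1
  have hmin : min (0:ℝ) y = 0 := min_eq_left h0y
  have hmax : max (0:ℝ) y = y := max_eq_right h0y
  have huIcc : uIcc (0:ℝ) y = Icc 0 y := uIcc_of_le h0y
  have hsub : Icc (0:ℝ) y ⊆ Icc 0 1 := Icc_subset_Icc le_rfl hy.2
  have h0mem : (0:ℝ) ∈ Icc (0:ℝ) 1 := by norm_num
  have h1mem : (1:ℝ) ∈ Icc (0:ℝ) 1 := by norm_num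
  have hf : ContinuousOn (gArcsin 2 4) (uIcc 0 y) :=
    gA_cont.mono (by rw [huIcc]; exact hsub)
  have hff' : ∀ u ∈ Ioo (min (0:ℝ) y) (max (0:ℝ) y),
      HasDerivWithinAt (gArcsin 2 4) (lemF u) (Ioi u) u := by
    intro u hu
    rw [hmin, hmax] at hu
    exact (gA_deriv hu.1 (lt_of_lt_of_le hu.2 hy.2)).hasDerivWithinAt
  have hg_cont : ContinuousOn lemSl (gArcsin 2 4 '' Ioo (min (0:ℝ) y) (max (0:ℝ) y)) := by
    rw [hmin, hmax]
    intro t ht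
    obtain ⟨u, hu, rfl⟩ := ht
    have hu1 : u < 1 := lt_of_lt_of_le hu.2 hy.2
    have hu' : u ∈ Icc (0:ℝ) 1 := ⟨hu.1.le, hu1.le⟩
    have h0 : 0 < gArcsin 2 4 u := by
      rw [← gA_zero]; exact gA_mono h0mem hu' hu.1
    have h1 : gArcsin 2 4 u < gArcsin 2 4 1 := gA_mono hu' h1mem hu1
    exact (lemSl_contAt h0 h1).continuousWithinAt
  have hg1 : IntegrableOn lemSl (gArcsin 2 4 '' uIcc 0 y) := by
    apply lemSl_int.mono_set
    rintro t ⟨u, hu, rfl⟩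
    exact gA_mem (hsub (huIcc ▸ hu))
  have hg2 : IntegrableOn (fun u => lemF u • (lemSl ∘ gArcsin 2 4) u) (uIcc 0 y) := by
    rw [huIcc]
    have hbase : IntegrableOn (fun u => lemF u * u) (Icc 0 y) := by
      have := (lemF_ii h0mem hy).mul_continuousOn continuous_id.continuousOn
      rwa [intervalIntegrable_iff_integrableOn_Icc_of_le h0y] at this
    apply hbase.congr_fun ?_ measurableSet_Icc
    intro u hu
    simp only [Function.comp, smul_eq_mul]
    rw [lemSl_gA (hsub hu)]
  have hsubst := intervalIntegral.integral_comp_smul_deriv''' hf hff' hg_cont hg1 hg2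
  rw [gA_zero, hxy] at hsubst
  rw [← hsubst]
  have hcongr : ∫ u in (0:ℝ)..y, lemF u • (lemSl ∘ gArcsin 2 4) u
      = ∫ u in (0:ℝ)..y, lemF u * u := by
    apply intervalIntegral.integral_congr
    intro u hu
    rw [huIcc] at hu
    simp only [Function.comp, smul_eq_mul]
    rw [lemSl_gA (hsub hu)]
  rw [hcongr, arcsin_int hy]
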